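/- Let ω ∈ Ω, m ∈ ℕ and b = (m−1,0), and let ω^b be defined by ω^b(0,0) = ω(γ_b^ω), ω^b(0,y) = ω(γ_{b+(0,y)}^ω) − ω(γ_{b+(0,y−1)}^ω) for y ≥ 1, and ω^b(z) = ω(b+z) otherwise. Then ω ∈ Ω_m if and only if ω^b ∈ Ω_1, where Ω_k = {ω : γ_{(k,1)}^ω = ((0,0),(1,0),…,(k,0),(k,1))}. -/

import Mathlib

open scoped NNReal

/-- A site of the lattice `ℤ²`. -/
abbrev Site : Type := ℤ × ℤ

/-- The positive quadrant `ℤ₊²`. -/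
def posQuad : Set Site := {z : Site | 0 ≤ z.1 ∧ 0 ≤ z.2}

/-- An admissible (up-right) step. -/
def IsStep (u v : Site) : Prop := v = u + (1, 0) ∨ v = u + (0, 1)

/-- `γ` is an up-right path from `(0,0)` to `z`, i.e. `γ ∈ Γ_z`. -/
def IsPathTo (z : Site) (γ : List Site) : Prop :=
  γ.head? = some ((0, 0) : Site) ∧ γ.getLast? = some z ∧ γ.Chain' IsStep

/-- The length `ω(γ) = Σ_{z ∈ γ} ω(z)` of a path `γ` under the configuration `ω`. -/
noncomputable def plen (ω : Site → ℝ) (γ : List Site) : ℝ := (γ.map ω).sum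

/-- `γ ∈ Γ_z` is `ω`-optimal if its length is maximal over `Γ_z`. -/
def IsOptimal (ω : Site → ℝ) (z : Site) (γ : List Site) : Prop :=
  IsPathTo z γ ∧ ∀ γ' : List Site, IsPathTo z γ' → plen ω γ' ≤ plen ω γ

/-- `γ` is below `γ'`: at every step index, the second coordinate of the site of `γ`
is at most that of the corresponding site of `γ'`. -/
def Below (γ γ' : List Site) : Prop :=
  ∀ (i : ℕ) (h : i < γ.length) (h' : i < γ'.length),
    (γ.get ⟨i, h⟩).2 ≤ (γ'.get ⟨i, h'⟩).2

/-- `γ` is the low-optimal path of `Γ_z`: it is `ω`-optimal and below every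
`ω`-optimal path of `Γ_z`. -/
def IsLowOptimal (ω : Site → ℝ) (z : Site) (γ : List Site) : Prop :=
  IsOptimal ω z γ ∧ ∀ γ' : List Site, IsOptimal ω z γ' → Below γ γ'

open Classical in
/-- The low-optimal path `γ_z^ω` (an arbitrary default when it does not exist). -/
noncomputable def lowOpt (ω : Site → ℝ) (z : Site) : List Site :=
  if h : ∃ γ : List Site, IsLowOptimal ω z γ then h.choose else []

/-- The vertex set `V(T_z^ω) = {z' ∈ ℤ₊² : z ∈ γ_{z'}^ω}` of the subtree rooted at `z`. -/
def treeV (ω : Site → ℝ) (z : Site) : Set Site :=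
  {z' : Site | z' ∈ posQuad ∧ z ∈ lowOpt ω z'}

/-- The path `((0,0), (1,0), …, (m,0), (m,1))`. -/
def axisPath (m : ℕ) : List Site :=
  ((List.range (m + 1)).map fun i => ((i : ℤ), 0)) ++ [((m : ℤ), 1)]

def row0 (n : ℕ) : List Site := (List.range (n+1)).map fun i : ℕ => ((i:ℤ), 0)

lemma flatMap_single {α β : Type} (f : α → β) (l : List α) :
    (l.flatMap fun a => [f a]) = l.map f := by
  induction l with
  | nil => rfl
  | cons a l ih => simp [List.flatMap_cons, ih]

def pathK (n k : ℕ) : List Site :=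
  row0 k ++ (List.range (n+1-k)).map fun i : ℕ => ((k:ℤ)+i, 1)

lemma row0_succ (n : ℕ) : row0 (n+1) = row0 n ++ [(((n:ℤ)+1), 0)] := by
  simp [row0, List.range_succ]

lemma pathK_self (n : ℕ) : pathK n n = row0 n ++ [((n:ℤ), 1)] := by
  have : List.range 1 = [0] := rfl
  simp [pathK, this]

lemma pathK_succ (n k : ℕ) (hk : k ≤ n) :
    pathK (n+1) k = pathK n k ++ [(((n:ℤ)+1), 1)] := by
  have h1 : n + 1 + 1 - k = (n + 1 - k) + 1 := by omega
  have h2 : ((k:ℤ) + ((n + 1 - k : ℕ) : ℤ)) = (n:ℤ) + 1 := by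
    have : ((n + 1 - k : ℕ) : ℤ) = (n:ℤ) + 1 - k := by omega
    omega
  simp [pathK, h1, List.range_succ, h2]

lemma path_concat {w z : Site} {γ : List Site} (h : IsPathTo w γ) (hs : IsStep w z) :
    IsPathTo z (γ ++ [z]) := by
  obtain ⟨h1, h2, h3⟩ := h
  have hne : γ ≠ [] := by rintro rfl; simp at h1
  refine ⟨?_, ?_, ?_⟩
  · rwa [List.head?_append_of_ne_nil _ hne]
  · simp
  · change List.IsChain IsStep _
    rw [List.isChain_append]
    refine ⟨h3, List.isChain_singleton _, ?_⟩
    intro x hx y hy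
    simp at hy
    rw [h2] at hx
    simp at hx
    subst hx; subst hy; exact hs

lemma path_decomp {z : Site} {γ : List Site} (h : IsPathTo z γ) :
    (γ = [((0,0) : Site)] ∧ z = (0,0)) ∨
    ∃ γ' w, IsPathTo w γ' ∧ IsStep w z ∧ γ = γ' ++ [z] := by
  obtain ⟨h1, h2, h3⟩ := h
  rcases List.eq_nil_or_concat γ with rfl | ⟨l, a, rfl⟩
  · simp at h1
  · simp only [List.concat_eq_append] at h1 h2 h3 ⊢
    have ha : a = z := by simpa using h2
    subst ha
    rcases List.eq_nil_or_concat l with rfl | ⟨l', b, rfl⟩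
    · left
      simp at h1
      simp [h1]
    · right
      simp only [List.concat_eq_append] at h1 h2 h3 ⊢
      have hne : l' ++ [b] ≠ [] := by simp
      change List.IsChain IsStep _ at h3
      rw [List.isChain_append] at h3
      obtain ⟨hc, -, hstep⟩ := h3
      refine ⟨l' ++ [b], b, ⟨?_, ?_, hc⟩, ?_, rfl⟩
      · rwa [List.head?_append_of_ne_nil _ hne] at h1
      · simp
      · exact hstep b (by simp) a (by simp)

lemma path_nonneg (γ : List Site) (z : Site) (h : IsPathTo z γ) :
    0 ≤ z.1 ∧ 0 ≤ z.2 := by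
  rcases path_decomp h with ⟨rfl, rfl⟩ | ⟨γ', w, h', hs, hγ⟩
  · simp
  · have hw := path_nonneg γ' w h'
    rcases hs with rfl | rfl <;> constructor <;> simp <;> omega
termination_by γ.length
decreasing_by subst hγ; simp

lemma isPathTo_row0 (n : ℕ) : IsPathTo ((n:ℤ), 0) (row0 n) := by
  induction n with
  | zero =>
    have hr : row0 0 = [(((0:ℤ),(0:ℤ)) : Site)] := rfl
    rw [hr]
    exact ⟨rfl, rfl, List.isChain_singleton _⟩
  | succ n ih =>
    rw [row0_succ]
    have := path_concat ih (z := ((n:ℤ)+1, 0)) (Or.inl (by simp [Prod.ext_iff]))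
    simpa using this

lemma isPathTo_pathK (n k : ℕ) (hk : k ≤ n) : IsPathTo ((n:ℤ), 1) (pathK n k) := by
  induction n with
  | zero =>
    interval_cases k
    rw [pathK_self]
    have := path_concat (isPathTo_row0 0) (z := ((0:ℤ),1)) (Or.inr (by simp [Prod.ext_iff]))
    simpa using this
  | succ n ih =>
    rcases Nat.lt_or_ge k (n+1) with h | h
    · rw [pathK_succ n k (by omega)]
      have := path_concat (ih (by omega)) (z := ((n:ℤ)+1,1)) (Or.inl (by simp [Prod.ext_iff]))
      simpa using this
    · have : k = n + 1 := by omega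
      subst this
      rw [pathK_self]
      have := path_concat (isPathTo_row0 (n+1)) (z := (((n+1:ℕ):ℤ),1))
        (Or.inr (by simp [Prod.ext_iff]))
      simpa using this

lemma path_eq_row0 : ∀ (n : ℕ) (γ : List Site), IsPathTo ((n:ℤ), 0) γ → γ = row0 n := by
  intro n
  induction n with
  | zero =>
    intro γ h
    rcases path_decomp h with ⟨rfl, -⟩ | ⟨γ', w, h', hs, rfl⟩
    · simp [row0]
    · exfalso
      have hw := path_nonneg γ' w h'
      rcases hs with hs | hs <;>
        (have := congrArg Prod.fst hs; have := congrArg Prod.snd hs;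
         simp at *; omega)
  | succ n ih =>
    intro γ h
    rcases path_decomp h with ⟨-, hz⟩ | ⟨γ', w, h', hs, rfl⟩
    · exfalso; have := congrArg Prod.fst hz; simp at this; omega
    · have hw := path_nonneg γ' w h'
      rcases hs with hs | hs
      · have hw1 : w = ((n:ℤ), 0) := by
          have h1 := congrArg Prod.fst hs; have h2 := congrArg Prod.snd hs
          simp at h1 h2
          ext <;> simp <;> omega
        rw [ih γ' (hw1 ▸ h'), row0_succ]
        norm_num
      · exfalso
        have h2 := congrArg Prod.snd hs; simp at h2; omega

lemma path_eq_pathK : ∀ (n : ℕ) (γ : List Site), IsPathTo ((n:ℤ), 1) γ →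
    ∃ k ≤ n, γ = pathK n k := by
  intro n
  induction n with
  | zero =>
    intro γ h
    rcases path_decomp h with ⟨-, hz⟩ | ⟨γ', w, h', hs, rfl⟩
    · exfalso; have := congrArg Prod.snd hz; simp at this
    · have hw := path_nonneg γ' w h'
      rcases hs with hs | hs
      · exfalso
        have h1 := congrArg Prod.fst hs; simp at h1; omega
      · have hw1 : w = ((0:ℤ), 0) := by
          have h1 := congrArg Prod.fst hs; have h2 := congrArg Prod.snd hs
          simp at h1 h2
          ext <;> simp <;> omega
        refine ⟨0, le_refl 0, ?_⟩
        rw [path_eq_row0 0 γ' (hw1 ▸ h'), pathK_self]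
        try norm_num
  | succ n ih =>
    intro γ h
    rcases path_decomp h with ⟨-, hz⟩ | ⟨γ', w, h', hs, rfl⟩
    · exfalso; have := congrArg Prod.snd hz; simp at this
    · rcases hs with hs | hs
      · have hw1 : w = ((n:ℤ), 1) := by
          have h1 := congrArg Prod.fst hs; have h2 := congrArg Prod.snd hs
          simp at h1 h2
          ext <;> simp <;> omega
        obtain ⟨k, hk, rfl⟩ := ih γ' (hw1 ▸ h')
        refine ⟨k, by omega, ?_⟩
        rw [pathK_succ n k hk]
        norm_num
      · have hw1 : w = (((n+1:ℕ):ℤ), 0) := by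
          have h1 := congrArg Prod.fst hs; have h2 := congrArg Prod.snd hs
          simp at h1 h2
          ext <;> simp <;> omega
        refine ⟨n+1, le_refl _, ?_⟩
        rw [path_eq_row0 (n+1) γ' (hw1 ▸ h'), pathK_self]
        try norm_num

lemma row0_length (n : ℕ) : (row0 n).length = n + 1 := by
  rw [row0, List.length_map, List.length_range]

lemma pathK_length (n k : ℕ) (hk : k ≤ n) : (pathK n k).length = n + 2 := by
  rw [pathK, List.length_append, row0_length, List.length_map, List.length_range]
  omega

lemma row0_getElem (n i : ℕ) (h : i < (row0 n).length) : (row0 n)[i] = (((i:ℤ), 0) : Site) := by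
  have e : row0 n = (List.range (n+1)).map fun i : ℕ => (((i:ℤ), 0) : Site) := rfl
  rw [List.getElem_of_eq e h, List.getElem_map, List.getElem_range]

lemma pathK_get_snd (n k : ℕ) (hk : k ≤ n) (i : ℕ) (h : i < (pathK n k).length) :
    ((pathK n k).get ⟨i, h⟩).2 = if i ≤ k then 0 else 1 := by
  have e : pathK n k = row0 k ++ (List.range (n+1-k)).map (fun i : ℕ => (((k:ℤ)+i, 1) : Site)) := rfl
  rw [List.get_eq_getElem, List.getElem_of_eq e h, List.getElem_append]
  split
  · next h1 =>
    rw [row0_length] at h1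
    rw [if_pos (by omega), row0_getElem]
  · next h1 =>
    rw [row0_length] at h1
    rw [if_neg (by omega), List.getElem_map]


lemma below_pathK_iff (n k j : ℕ) (hk : k ≤ n) (hj : j ≤ n) :
    Below (pathK n k) (pathK n j) ↔ j ≤ k := by
  constructor
  · intro hb
    by_contra hc
    push_neg at hc
    have h1 : j < (pathK n k).length := by rw [pathK_length n k hk]; omega
    have h2 : j < (pathK n j).length := by rw [pathK_length n j hj]; omega
    have := hb j h1 h2
    rw [pathK_get_snd n k hk j h1, pathK_get_snd n j hj j h2,
      if_neg (by omega), if_pos (le_refl j)] at this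
    norm_num at this
  · intro hjk i h h'
    rw [pathK_get_snd n k hk i h, pathK_get_snd n j hj i h']
    split <;> split <;> omega

lemma plen_concat (ω : Site → ℝ) (γ : List Site) (z : Site) :
    plen ω (γ ++ [z]) = plen ω γ + ω z := by
  simp [plen]


lemma lowOpt_spec {ω : Site → ℝ} {z : Site} (h : ∃ γ : List Site, IsLowOptimal ω z γ) :
    IsLowOptimal ω z (lowOpt ω z) := by
  rw [lowOpt, dif_pos h]
  exact h.choose_spec

lemma lowOpt_eq_of_isLowOptimal_row0 {ω : Site → ℝ} (n : ℕ) :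
    lowOpt ω ((n:ℤ), 0) = row0 n := by
  have hopt : IsLowOptimal ω ((n:ℤ), 0) (row0 n) := by
    refine ⟨⟨isPathTo_row0 n, ?_⟩, ?_⟩
    · intro γ' h'
      rw [path_eq_row0 n γ' h']
    · intro γ' h'
      rw [path_eq_row0 n γ' h'.1]
      intro i h hh
      exact le_refl _
  have hs := lowOpt_spec ⟨_, hopt⟩
  exact path_eq_row0 n _ hs.1.1

/-- Existence of a low-optimal path to `(n,1)`, with the greatest argmax index. -/
lemma exists_lowOptimal_n1 (ω : Site → ℝ) (n : ℕ) :
    ∃ k ≤ n, IsLowOptimal ω ((n:ℤ), 1) (pathK n k) := by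
  classical
  set P : ℕ → Prop := fun k => ∀ j ≤ n, plen ω (pathK n j) ≤ plen ω (pathK n k) with hPdef
  obtain ⟨k₀, hk₀mem, hk₀⟩ := Finset.exists_max_image (Finset.range (n+1))
    (fun k => plen ω (pathK n k)) ⟨0, Finset.mem_range.2 (by omega)⟩
  have hk₀n : k₀ ≤ n := by rw [Finset.mem_range] at hk₀mem; omega
  have hPk₀ : P k₀ := by
    intro j hj
    exact hk₀ j (Finset.mem_range.2 (by omega))
  set k := Nat.findGreatest P n with hkdef
  have hkn : k ≤ n := Nat.findGreatest_le n
  have hmax : P k := Nat.findGreatest_spec hk₀n hPk₀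
  refine ⟨k, hkn, ⟨isPathTo_pathK n k hkn, ?_⟩, ?_⟩
  · intro γ' h'
    obtain ⟨j, hj, rfl⟩ := path_eq_pathK n γ' h'
    exact hmax j hj
  · intro γ' h'
    obtain ⟨j, hj, rfl⟩ := path_eq_pathK n γ' h'.1
    rw [below_pathK_iff n k j hkn hj]
    have hje : plen ω (pathK n j) = plen ω (pathK n k) :=
      le_antisymm (hmax j hj) (h'.2 _ (isPathTo_pathK n k hkn))
    have hPj : P j := by
      intro i hi
      rw [hje]
      exact hmax i hi
    exact Nat.le_findGreatest hj hPj

lemma lowOpt_n1_eq_iff (ω : Site → ℝ) (n : ℕ) :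
    lowOpt ω ((n:ℤ), 1) = pathK n n ↔
      ∀ k ≤ n, plen ω (pathK n k) ≤ plen ω (pathK n n) := by
  constructor
  · intro he
    by_cases h : ∃ γ, IsLowOptimal ω ((n:ℤ),1) γ
    · have hs := lowOpt_spec h
      rw [he] at hs
      intro k hk
      exact hs.1.2 _ (isPathTo_pathK n k hk)
    · rw [lowOpt, dif_neg h] at he
      have hlen := pathK_length n n le_rfl
      rw [← he] at hlen
      simp at hlen
  · intro hle
    have hlo : IsLowOptimal ω ((n:ℤ),1) (pathK n n) := by
      refine ⟨⟨isPathTo_pathK n n le_rfl, ?_⟩, ?_⟩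
      · intro γ' h'
        obtain ⟨k, hk, rfl⟩ := path_eq_pathK n γ' h'
        exact hle k hk
      · intro γ' h'
        obtain ⟨j, hj, rfl⟩ := path_eq_pathK n γ' h'.1
        rw [below_pathK_iff n n j le_rfl hj]
        exact hj
    have hs := lowOpt_spec ⟨_, hlo⟩
    obtain ⟨j, hj, hje⟩ := path_eq_pathK n _ hs.1.1
    have h1 := hs.2 _ hlo.1
    rw [hje, below_pathK_iff n j n hj le_rfl] at h1
    rw [hje, le_antisymm hj h1]

lemma plen_lowOpt_n1_max (ω : Site → ℝ) (n : ℕ) :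
    (∀ j ≤ n, plen ω (pathK n j) ≤ plen ω (lowOpt ω ((n:ℤ),1))) ∧
      (∃ k ≤ n, plen ω (lowOpt ω ((n:ℤ),1)) = plen ω (pathK n k)) := by
  obtain ⟨k, hk, hlo⟩ := exists_lowOptimal_n1 ω n
  have hs := lowOpt_spec ⟨_, hlo⟩
  constructor
  · intro j hj
    exact hs.1.2 _ (isPathTo_pathK n j hj)
  · exact ⟨k, hk, le_antisymm (hlo.1.2 _ hs.1.1) (hs.1.2 _ hlo.1.1)⟩

lemma axisPath_eq_pathK (m : ℕ) : axisPath m = pathK m m := by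
  rw [pathK_self]
  congr 1
  simp [axisPath, row0, flatMap_single, List.map_map, Function.comp]

/-- Step II of the proof of Theorem 3, equivalence (9): `ω ∈ Ω_m ↔ ω^b ∈ Ω_1`. -/
theorem omegaM_iff_omega1 (ω : Site → ℝ) (hω : ∀ z : Site, 0 ≤ ω z)
    (m : ℕ) (hm : 1 ≤ m) (ωb : Site → ℝ)
    (h0 : ωb (0, 0) = plen ω (lowOpt ω ((m : ℤ) - 1, 0)))
    (hy : ∀ y : ℤ, 1 ≤ y →
      ωb (0, y) = plen ω (lowOpt ω (((m : ℤ) - 1, 0) + (0, y)))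
        - plen ω (lowOpt ω (((m : ℤ) - 1, 0) + (0, y - 1))))
    (hoth : ∀ z : Site, z ≠ (0, 0) → ¬(z.1 = 0 ∧ 1 ≤ z.2) →
      ωb z = ω (((m : ℤ) - 1, 0) + z)) :
    lowOpt ω ((m : ℤ), 1) = axisPath m ↔ lowOpt ωb (1, 1) = axisPath 1 := by
  set n := m - 1 with hn
  have hm1 : m = n + 1 := by omega
  have hmc : (m:ℤ) = (n:ℤ) + 1 := by omega
  -- left side characterization
  have hL : (lowOpt ω ((m : ℤ), 1) = axisPath m) ↔
      ∀ k ≤ m, plen ω (pathK m k) ≤ plen ω (pathK m m) := by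
    rw [axisPath_eq_pathK]
    exact lowOpt_n1_eq_iff ω m
  -- right side characterization
  have hR : (lowOpt ωb (1, 1) = axisPath 1) ↔
      ∀ k ≤ 1, plen ωb (pathK 1 k) ≤ plen ωb (pathK 1 1) := by
    rw [axisPath_eq_pathK]
    exact lowOpt_n1_eq_iff ωb 1
  have e10 : pathK 1 0 = [((0:ℤ),(0:ℤ)), ((0:ℤ),(1:ℤ)), ((1:ℤ),(1:ℤ))] := by rfl
  have e11 : pathK 1 1 = [((0:ℤ),(0:ℤ)), ((1:ℤ),(0:ℤ)), ((1:ℤ),(1:ℤ))] := by rfl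
  have hRcond : (∀ k ≤ 1, plen ωb (pathK 1 k) ≤ plen ωb (pathK 1 1)) ↔
      ωb (0,1) ≤ ωb (1,0) := by
    constructor
    · intro h
      have h0' := h 0 (by omega)
      rw [e10, e11] at h0'
      simp [plen] at h0'
      linarith
    · intro h k hk
      interval_cases k
      · rw [e10, e11]
        simp [plen]
        linarith
      · exact le_rfl
  -- values of ωb
  have hb1 : ωb (0,1) = plen ω (lowOpt ω ((n:ℤ),1)) - plen ω (row0 n) := by
    have h' := hy 1 le_rfl
    have e1 : ((((m:ℤ) - 1, 0) : Site) + (0, 1)) = ((n:ℤ), 1) := by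
      simp [Prod.ext_iff]; omega
    have e2 : ((((m:ℤ) - 1, 0) : Site) + (0, 1 - 1)) = ((n:ℤ), 0) := by
      simp [Prod.ext_iff]; omega
    rw [e1, e2, lowOpt_eq_of_isLowOptimal_row0] at h'
    exact h'
  have hb2 : ωb (1,0) = ω ((m:ℤ), 0) := by
    have h' := hoth (1,0) (by simp [Prod.ext_iff]) (by norm_num)
    rw [h']
    congr 1
    simp [Prod.ext_iff]
  -- sum identities
  have hsplit : ∀ k ≤ n, plen ω (pathK m k) = plen ω (pathK n k) + ω ((m:ℤ),1) := by
    intro k hk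
    have e := pathK_succ n k hk
    rw [← hm1] at e
    rw [e, plen_concat, ← hmc]
  have htop : plen ω (pathK m m) = plen ω (row0 n) + ω ((m:ℤ),0) + ω ((m:ℤ),1) := by
    have e := row0_succ n
    rw [← hm1] at e
    rw [pathK_self, e, plen_concat, plen_concat, ← hmc]
    try ring
  rw [hL, hR, hRcond, hb1, hb2]
  obtain ⟨hub, k₀, hk₀, hattain⟩ := plen_lowOpt_n1_max ω n
  constructor
  · intro h
    rw [sub_le_iff_le_add, hattain]
    have h1 := h k₀ (by omega)
    rw [hsplit k₀ hk₀, htop] at h1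
    linarith
  · intro h k hk
    rw [sub_le_iff_le_add] at h
    rcases Nat.lt_or_ge k m with hlt | hge
    · have hkn : k ≤ n := by omega
      rw [hsplit k hkn, htop]
      have h2 := hub k hkn
      linarith
    · have hkm : k = m := by omega
      rw [hkm]
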